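/- For every integer r > 0 and every a ∈ L, there exists y ∈ L such that ε^r·σ(y) − y = a. Moreover, if a ∈ o_L then y can be taken in o_L. -/

import Mathlib

noncomputable section

/-- The ε-adic valuation on `L = k̄((ε))`, with `val 0 = ∞`. -/
def val {K : Type*} [Field K] (x : LaurentSeries K) : WithTop ℤ := x.orderTop

/-- The uniformizer ε of the Laurent series field. -/
def eps (K : Type*) [Field K] : LaurentSeries K := HahnSeries.single 1 1

/-- `σ : L → L` is the Frobenius automorphism: it fixes ε and raises each Laurent-series
coefficient to the `q`-th power.  (This property determines `σ` uniquely.) -/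
def IsFrobenius (K : Type*) [Field K] (q : ℕ)
    (σ : LaurentSeries K → LaurentSeries K) : Prop :=
  ∀ (x : LaurentSeries K) (n : ℤ), (σ x).coeff n = (x.coeff n) ^ q

/-- Auxiliary coefficient function solving the recurrence
`f n = f (n - r) ^ q - a.coeff n` for `n ≥ N` and `f n = 0` for `n < N`. -/
def asf {K : Type*} [Field K] (q : ℕ) (r : ℤ) (hr : 0 < r) (N : ℤ)
    (a : LaurentSeries K) (n : ℤ) : K :=
  if _h : n < N then 0 else (asf q r hr N a (n - r)) ^ q - a.coeff n
termination_by (n + 1 - N).toNat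
decreasing_by
  simp_wf
  omega

theorem asf_of_lt {K : Type*} [Field K] (q : ℕ) (r : ℤ) (hr : 0 < r) (N : ℤ)
    (a : LaurentSeries K) (n : ℤ) (hn : n < N) : asf q r hr N a n = 0 := by
  rw [asf]; simp [hn]

theorem asf_of_not_lt {K : Type*} [Field K] (q : ℕ) (r : ℤ) (hr : 0 < r) (N : ℤ)
    (a : LaurentSeries K) (n : ℤ) (hn : ¬ n < N) :
    asf q r hr N a n = (asf q r hr N a (n - r)) ^ q - a.coeff n := by
  rw [asf]; simp [hn]

theorem eps_zpow {K : Type*} [Field K] (r : ℤ) (hr : 0 < r) :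
    eps K ^ r = HahnSeries.single r (1 : K) := by
  obtain ⟨m, rfl⟩ : ∃ m : ℕ, r = (m : ℤ) := ⟨r.toNat, (Int.toNat_of_nonneg hr.le).symm⟩
  rw [zpow_natCast, eps, HahnSeries.single_pow]
  simp

/-- for every integer `r > 0` and every `a ∈ L` the equation
`ε^r·σ(y) − y = a` has a solution `y ∈ L`; moreover if `a ∈ o_L` then `y` can be taken
in `o_L`. -/
theorem artin_schreier_type_equation_solvable (F : Type*) [Field F] [Fintype F]
    (σ : LaurentSeries (AlgebraicClosure F) → LaurentSeries (AlgebraicClosure F))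
    (hσ : IsFrobenius (AlgebraicClosure F) (Fintype.card F) σ)
    (r : ℤ) (hr : 0 < r) (a : LaurentSeries (AlgebraicClosure F)) :
    ∃ y : LaurentSeries (AlgebraicClosure F),
      eps (AlgebraicClosure F) ^ r * σ y - y = a ∧
      (0 ≤ val a → 0 ≤ val y) := by
  classical
  set K := AlgebraicClosure F
  set q := Fintype.card F with hq
  have hq0 : q ≠ 0 := Fintype.card_ne_zero
  set N : ℤ := min 0 a.order with hN
  have hcoeffa : ∀ n < N, a.coeff n = 0 := by
    intro n hn
    rcases eq_or_ne a 0 with rfl | ha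
    · simp
    · exact HahnSeries.coeff_eq_zero_of_lt_order (lt_of_lt_of_le hn (min_le_right _ _))
  set f : ℤ → K := asf q r hr N a with hf
  have hf0 : ∀ n < N, f n = 0 := fun n hn => asf_of_lt q r hr N a n hn
  have hbdd : BddBelow (Function.support f) :=
    HahnSeries.forallLTEqZero_supp_BddBelow f N hf0
  set y : LaurentSeries K := HahnSeries.ofSuppBddBelow f hbdd with hy
  have hyc : ∀ n, y.coeff n = f n := fun n => rfl
  refine ⟨y, ?_, ?_⟩
  · rw [← HahnSeries.coeff_inj]
    funext n
    rw [HahnSeries.coeff_sub, eps_zpow r hr]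
    have : (HahnSeries.single r (1 : K) * σ y).coeff n = (σ y).coeff (n - r) := by
      have := HahnSeries.coeff_single_mul_add (r := (1 : K)) (x := σ y) (a := n - r) (b := r)
      rw [sub_add_cancel] at this
      rw [this, one_mul]
    rw [this, hσ y (n - r), hyc, hyc]
    by_cases hn : n < N
    · rw [hf0 n hn, hf0 (n - r) (by omega), hcoeffa n hn, zero_pow hq0]
      ring
    · rw [hf, asf_of_not_lt q r hr N a n hn]
      ring
  · intro hva
    have ha0 : 0 ≤ a.order := by
      rw [val, ← HahnSeries.zero_le_orderTop_iff] at *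
      exact hva
    have hN0 : N = 0 := by omega
    rcases eq_or_ne y 0 with hy0 | hy0
    · rw [val, hy0, HahnSeries.orderTop_zero]; exact le_top
    · rw [val, HahnSeries.zero_le_orderTop_iff]
      have hfne : f ≠ 0 := by
        intro hfz
        apply hy0
        rw [← HahnSeries.coeff_fun_eq_zero_iff]
        funext n
        rw [hyc n, hfz]
      have := HahnSeries.order_ofForallLtEqZero f hfne 0
        (fun m hm => hf0 m (by omega))
      exact this
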